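/- Let $\mu_1$, $\mu_2$ be probability measures on compact sets $K_1\subset\mathbb{C}^{n_1}$, $K_2\subset\mathbb{C}^{n_2}$, each satisfying the Bernstein–Markov property. Then the product measure $\mu_1\times\mu_2$ on $K_1\times K_2$ satisfies the Bernstein–Markov property: for all $\epsilon>0$ there is $C(\epsilon)$ with $\|p\|_{K_1\times K_2}\le C(\epsilon)(1+\epsilon)^{\deg p}\|p\|_{L^2(\mu_1\times\mu_2)}$ for every polynomial $p$ on $\mathbb{C}^{n_1+n_2}$. -/

import Mathlib

open MeasureTheory

namespace Stmt15Aux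

open MvPolynomial

lemma aeval_eq_eval_complex {σ : Type} (f : σ → ℂ) (q : MvPolynomial σ ℂ) :
    aeval f q = eval f q := by
  rw [aeval_def]; rfl

lemma eval_aeval_elim₁ {n1 n2 : ℕ} (p : MvPolynomial (Fin n1 ⊕ Fin n2) ℂ)
    (x : Fin n1 → ℂ) (y : Fin n2 → ℂ) :
    eval x (aeval (Sum.elim X (fun j => C (y j))) p) = eval (Sum.elim x y) p := by
  rw [← aeval_eq_eval_complex, ← aeval_eq_eval_complex, ← AlgHom.comp_apply]
  congr 1
  apply algHom_ext
  intro i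
  cases i <;> simp

lemma eval_aeval_elim₂ {n1 n2 : ℕ} (p : MvPolynomial (Fin n1 ⊕ Fin n2) ℂ)
    (x : Fin n1 → ℂ) (y : Fin n2 → ℂ) :
    eval y (aeval (Sum.elim (fun j => C (x j)) X) p) = eval (Sum.elim x y) p := by
  rw [← aeval_eq_eval_complex, ← aeval_eq_eval_complex, ← AlgHom.comp_apply]
  congr 1
  apply algHom_ext
  intro i
  cases i <;> simp

lemma deg_aeval_le {σ τ : Type*} (g : σ → MvPolynomial τ ℂ)
    (hg : ∀ i, (g i).totalDegree ≤ 1) (p : MvPolynomial σ ℂ) :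
    (aeval g p).totalDegree ≤ p.totalDegree := by
  conv_lhs => rw [p.as_sum]
  rw [map_sum]
  refine (totalDegree_finset_sum _ _).trans (Finset.sup_le fun s hs => ?_)
  rw [aeval_monomial]
  refine (totalDegree_mul _ _).trans ?_
  have h1 : (algebraMap ℂ (MvPolynomial τ ℂ) (coeff s p)).totalDegree = 0 := totalDegree_C _
  rw [h1, zero_add, Finsupp.prod]
  refine (totalDegree_finset_prod _ _).trans ?_
  calc ∑ i ∈ s.support, ((g i) ^ (s i)).totalDegree
      ≤ ∑ i ∈ s.support, s i := by
        refine Finset.sum_le_sum fun i _ => ?_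
        calc ((g i) ^ (s i)).totalDegree ≤ s i * (g i).totalDegree := totalDegree_pow _ _
        _ ≤ s i * 1 := Nat.mul_le_mul_left _ (hg i)
        _ = s i := Nat.mul_one _
    _ ≤ p.totalDegree := by
        rw [totalDegree]
        exact Finset.le_sup (f := fun s : σ →₀ ℕ => s.sum fun _ e => e) hs

lemma rpow_half_sq {x : ℝ} (hx : 0 ≤ x) : (x ^ (1 / 2 : ℝ)) ^ 2 = x := by
  rw [← Real.rpow_natCast (x ^ (1 / 2 : ℝ)) 2, ← Real.rpow_mul hx]
  norm_num

lemma sq_mul_rpow_half {a x : ℝ} (ha : 0 ≤ a) (hx : 0 ≤ x) :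
    (a ^ 2 * x) ^ (1 / 2 : ℝ) = a * x ^ (1 / 2 : ℝ) := by
  rw [Real.mul_rpow (by positivity) hx, ← Real.rpow_natCast a 2, ← Real.rpow_mul ha]
  norm_num

end Stmt15Aux

/-- The product of two Bernstein–Markov measures is Bernstein–Markov on the product compact. -/
theorem stmt15 {n1 n2 : ℕ}
    (K1 : Set (Fin n1 → ℂ)) (K2 : Set (Fin n2 → ℂ))
    (hK1 : IsCompact K1) (hK2 : IsCompact K2)
    (hK1ne : K1.Nonempty) (hK2ne : K2.Nonempty)
    (μ1 : Measure (Fin n1 → ℂ)) (μ2 : Measure (Fin n2 → ℂ))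
    [IsProbabilityMeasure μ1] [IsProbabilityMeasure μ2]
    [SFinite μ2]
    (hμ1supp : μ1 K1ᶜ = 0) (hμ2supp : μ2 K2ᶜ = 0)
    (hBM1 : ∀ ε : ℝ, 0 < ε → ∃ C : ℝ, 0 < C ∧ ∀ p : MvPolynomial (Fin n1) ℂ,
      sSup ((fun z => ‖MvPolynomial.eval z p‖) '' K1) ≤
        C * (1 + ε) ^ p.totalDegree *
          (∫ z in K1, ‖MvPolynomial.eval z p‖ ^ 2 ∂μ1) ^ (1 / 2 : ℝ))
    (hBM2 : ∀ ε : ℝ, 0 < ε → ∃ C : ℝ, 0 < C ∧ ∀ p : MvPolynomial (Fin n2) ℂ,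
      sSup ((fun z => ‖MvPolynomial.eval z p‖) '' K2) ≤
        C * (1 + ε) ^ p.totalDegree *
          (∫ z in K2, ‖MvPolynomial.eval z p‖ ^ 2 ∂μ2) ^ (1 / 2 : ℝ)) :
    ∀ ε : ℝ, 0 < ε → ∃ C : ℝ, 0 < C ∧ ∀ p : MvPolynomial (Fin n1 ⊕ Fin n2) ℂ,
      sSup ((fun z : (Fin n1 → ℂ) × (Fin n2 → ℂ) =>
          ‖MvPolynomial.eval (Sum.elim z.1 z.2) p‖) '' (K1 ×ˢ K2)) ≤
        C * (1 + ε) ^ p.totalDegree *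
          (∫ z in K1 ×ˢ K2, ‖MvPolynomial.eval (Sum.elim z.1 z.2) p‖ ^ 2
            ∂(μ1.prod μ2)) ^ (1 / 2 : ℝ) := by
  intro ε hε
  -- choose δ with (1+δ)^2 = 1+ε
  set δ : ℝ := Real.sqrt (1 + ε) - 1 with hδdef
  have h1ε : (0 : ℝ) ≤ 1 + ε := by linarith
  have hsqrt : 1 < Real.sqrt (1 + ε) := by
    nlinarith [Real.sq_sqrt h1ε, Real.sqrt_nonneg (1 + ε)]
  have hδ : 0 < δ := by simp only [hδdef]; linarith
  have h1δ : (1 : ℝ) + δ = Real.sqrt (1 + ε) := by simp [hδdef]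
  have hδsq : ((1 : ℝ) + δ) ^ 2 = 1 + ε := by
    rw [h1δ, sq, Real.mul_self_sqrt h1ε]
  have h1δ0 : (0 : ℝ) ≤ 1 + δ := by linarith
  have h1δ1 : (1 : ℝ) ≤ 1 + δ := by linarith
  obtain ⟨C1, hC1, hB1⟩ := hBM1 δ hδ
  obtain ⟨C2, hC2, hB2⟩ := hBM2 δ hδ
  refine ⟨C1 * C2, mul_pos hC1 hC2, fun p => ?_⟩
  set d := p.totalDegree with hd
  -- the function and its continuity
  set F : (Fin n1 → ℂ) × (Fin n2 → ℂ) → ℝ :=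
    fun z => ‖MvPolynomial.eval (Sum.elim z.1 z.2) p‖ ^ 2 with hF
  have hcontev : Continuous fun z : (Fin n1 → ℂ) × (Fin n2 → ℂ) =>
      MvPolynomial.eval (Sum.elim z.1 z.2) p := by
    apply (MvPolynomial.continuous_eval p).comp
    apply continuous_pi
    intro i
    cases i with
    | inl i => exact (continuous_apply i).comp continuous_fst
    | inr i => exact (continuous_apply i).comp continuous_snd
  have hcontF : Continuous F := by
    apply Continuous.pow
    exact continuous_norm.comp hcontev
  have hFnn : ∀ z, 0 ≤ F z := fun z => by positivity
  -- integrability on the product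
  have hIF : IntegrableOn F (K1 ×ˢ K2) (μ1.prod μ2) :=
    hcontF.continuousOn.integrableOn_compact (hK1.prod hK2)
  have hIFr : Integrable F ((μ1.restrict K1).prod (μ2.restrict K2)) := by
    rwa [Measure.prod_restrict, ← IntegrableOn]
  set I : ℝ := ∫ z in K1 ×ˢ K2, F z ∂(μ1.prod μ2) with hIdef
  have hI0 : 0 ≤ I := integral_nonneg hFnn
  set H : (Fin n1 → ℂ) → ℝ := fun w => ∫ v in K2, F (w, v) ∂μ2 with hH
  have hHnn : ∀ w, 0 ≤ H w := fun w => integral_nonneg fun v => hFnn _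
  have hHint : IntegrableOn H K1 μ1 := hIFr.integral_prod_left
  have hFub : I = ∫ w in K1, H w ∂μ1 := by
    rw [hIdef, ← Measure.prod_restrict]
    exact integral_prod F hIFr
  -- pointwise bound
  refine csSup_le ((hK1ne.prod hK2ne).image _) ?_
  rintro r ⟨⟨x, y⟩, ⟨hx, hy⟩, rfl⟩
  simp only
  -- step 2: for every w, F (w, y) ≤ (C2 * (1+δ)^d)^2 * H w
  have step2 : ∀ w : Fin n1 → ℂ, F (w, y) ≤ (C2 * (1 + δ) ^ d) ^ 2 * H w := by
    intro w
    set q := MvPolynomial.aeval (Sum.elim (fun j => MvPolynomial.C (w j)) MvPolynomial.X) p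
      with hq
    have hdq : q.totalDegree ≤ d := by
      apply Stmt15Aux.deg_aeval_le
      intro i
      cases i with
      | inl i => simp [MvPolynomial.totalDegree_C]
      | inr i => exact le_of_eq (MvPolynomial.totalDegree_X _)
    have hev : ∀ v, MvPolynomial.eval v q = MvPolynomial.eval (Sum.elim w v) p :=
      fun v => Stmt15Aux.eval_aeval_elim₂ p w v
    have h1 : ‖MvPolynomial.eval (Sum.elim w y) p‖ ≤
        C2 * (1 + δ) ^ d * (H w) ^ (1 / 2 : ℝ) := by
      have hbdd : BddAbove ((fun z => ‖MvPolynomial.eval z q‖) '' K2) :=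
        (hK2.image (continuous_norm.comp (MvPolynomial.continuous_eval q))).bddAbove
      have hmem : ‖MvPolynomial.eval (Sum.elim w y) p‖ ∈
          (fun z => ‖MvPolynomial.eval z q‖) '' K2 := ⟨y, hy, congrArg norm (hev y)⟩
      refine (le_csSup hbdd hmem).trans ((hB2 q).trans ?_)
      have hint : (∫ z in K2, ‖MvPolynomial.eval z q‖ ^ 2 ∂μ2) = H w := by
        simp only [hH, hF]
        congr 1
        funext v
        rw [hev]
      rw [hint]
      gcongr
    calc F (w, y) = ‖MvPolynomial.eval (Sum.elim w y) p‖ ^ 2 := rfl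
      _ ≤ (C2 * (1 + δ) ^ d * (H w) ^ (1 / 2 : ℝ)) ^ 2 := by
          apply pow_le_pow_left₀ (norm_nonneg _) h1
      _ = (C2 * (1 + δ) ^ d) ^ 2 * ((H w) ^ (1 / 2 : ℝ)) ^ 2 := mul_pow _ _ _
      _ = (C2 * (1 + δ) ^ d) ^ 2 * H w := by rw [Stmt15Aux.rpow_half_sq (hHnn w)]
  -- step 3: ∫_{K1} F (w,y) ≤ (C2*(1+δ)^d)^2 * I
  have hGint : IntegrableOn (fun w => F (w, y)) K1 μ1 :=
    (hcontF.comp (continuous_id.prodMk continuous_const)).continuousOn.integrableOn_compact hK1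
  have step3 : (∫ w in K1, F (w, y) ∂μ1) ≤ (C2 * (1 + δ) ^ d) ^ 2 * I := by
    calc (∫ w in K1, F (w, y) ∂μ1)
        ≤ ∫ w in K1, (C2 * (1 + δ) ^ d) ^ 2 * H w ∂μ1 :=
          integral_mono hGint (hHint.const_mul _) fun w => step2 w
      _ = (C2 * (1 + δ) ^ d) ^ 2 * ∫ w in K1, H w ∂μ1 := integral_const_mul _ _
      _ = (C2 * (1 + δ) ^ d) ^ 2 * I := by rw [← hFub]
  -- step 1: bound |p(x,y)| via BM1
  set q := MvPolynomial.aeval (Sum.elim MvPolynomial.X (fun j => MvPolynomial.C (y j))) p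
    with hq
  have hdq : q.totalDegree ≤ d := by
    apply Stmt15Aux.deg_aeval_le
    intro i
    cases i with
    | inl i => exact le_of_eq (MvPolynomial.totalDegree_X _)
    | inr i => simp [MvPolynomial.totalDegree_C]
  have hev : ∀ w, MvPolynomial.eval w q = MvPolynomial.eval (Sum.elim w y) p :=
    fun w => Stmt15Aux.eval_aeval_elim₁ p w y
  have hbdd : BddAbove ((fun z => ‖MvPolynomial.eval z q‖) '' K1) :=
    (hK1.image (continuous_norm.comp (MvPolynomial.continuous_eval q))).bddAbove
  have hmem : ‖MvPolynomial.eval (Sum.elim x y) p‖ ∈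
      (fun z => ‖MvPolynomial.eval z q‖) '' K1 := ⟨x, hx, congrArg norm (hev x)⟩
  have hGnn : 0 ≤ ∫ w in K1, F (w, y) ∂μ1 := integral_nonneg fun w => hFnn _
  have hint : (∫ z in K1, ‖MvPolynomial.eval z q‖ ^ 2 ∂μ1)
      = ∫ w in K1, F (w, y) ∂μ1 := by
    simp only [hF]
    congr 1
    funext w
    rw [hev]
  calc ‖MvPolynomial.eval (Sum.elim x y) p‖
      ≤ sSup ((fun z => ‖MvPolynomial.eval z q‖) '' K1) := le_csSup hbdd hmem
    _ ≤ C1 * (1 + δ) ^ q.totalDegree *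
        (∫ z in K1, ‖MvPolynomial.eval z q‖ ^ 2 ∂μ1) ^ (1 / 2 : ℝ) := hB1 q
    _ ≤ C1 * (1 + δ) ^ d * (∫ w in K1, F (w, y) ∂μ1) ^ (1 / 2 : ℝ) := by
        rw [hint]
        gcongr
    _ ≤ C1 * (1 + δ) ^ d * ((C2 * (1 + δ) ^ d) ^ 2 * I) ^ (1 / 2 : ℝ) := by
        gcongr
    _ = C1 * C2 * (1 + ε) ^ d * I ^ (1 / 2 : ℝ) := by
        rw [Stmt15Aux.sq_mul_rpow_half (by positivity) hI0, ← hδsq, ← pow_mul]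
        ring_nf
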